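/- arXiv:math/0508306 — 2 statements merged into one kernel-verified Lean document; each statement's English description precedes it below -/
import Mathlib

section
/- The 2k-th moment of the semicircle distribution of (0, 2) equals the k-th Catalan number: (1/(2π)) ∫_{-2}^{2} t^{2k} √(4 - t²) dt = C_k = (1/(k+1)) · binom(2k, k). -/
open Real Finset intervalIntegral

lemma cos_pow_even_integral (m : ℕ) :
    ∫ x in (0:ℝ)..π, Real.cos x ^ (2 * m)
      = π * ∏ i ∈ Finset.range m, (2 * (i : ℝ) + 1) / (2 * i + 2) := by
  induction' m with j ih
  · simp
  · rw [Finset.prod_range_succ_comm, mul_left_comm, ← ih, Nat.mul_succ,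
      integral_cos_pow]
    simp [Real.sin_pi]

lemma prod_ratio_eq (m : ℕ) :
    ∏ i ∈ Finset.range m, (2 * (i : ℝ) + 1) / (2 * i + 2)
      = (Nat.centralBinom m : ℝ) / 4 ^ m := by
  induction' m with j ih
  · simp [Nat.centralBinom]
  · rw [Finset.prod_range_succ, ih]
    have h := Nat.succ_mul_centralBinom_succ j
    have h' : ((j : ℝ) + 1) * (Nat.centralBinom (j + 1) : ℝ)
        = 2 * (2 * j + 1) * (Nat.centralBinom j : ℝ) := by exact_mod_cast h
    have hj1 : (j : ℝ) + 1 ≠ 0 := by positivity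
    have h4 : (4 : ℝ) ^ j ≠ 0 := by positivity
    field_simp
    linear_combination (-2:ℝ) * 4 ^ j * h'

theorem semicircle_even_moments_catalan (k : ℕ) :
    (1 / (2 * Real.pi)) * ∫ t in (-2 : ℝ)..2, t ^ (2 * k) * Real.sqrt (4 - t ^ 2)
      = (catalan k : ℝ) ∧
    (catalan k : ℝ) = (1 / (k + 1 : ℝ)) * (Nat.choose (2 * k) k : ℝ) := by
  have hcat : ((k : ℝ) + 1) * (catalan k : ℝ) = (Nat.centralBinom k : ℝ) := by
    exact_mod_cast succ_mul_catalan_eq_centralBinom k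
  have hk1 : (k : ℝ) + 1 ≠ 0 := by positivity
  have hcb : (Nat.centralBinom k : ℝ) = (Nat.choose (2 * k) k : ℝ) := by
    simp [Nat.centralBinom]
  constructor
  · -- change of variables t = -2 cos θ
    have hg : Continuous fun t : ℝ => t ^ (2 * k) * Real.sqrt (4 - t ^ 2) := by
      exact (continuous_pow _).mul (Real.continuous_sqrt.comp (by continuity))
    have hderiv : ∀ x ∈ Set.uIcc (0:ℝ) π,
        HasDerivAt (fun θ : ℝ => -2 * Real.cos θ) (2 * Real.sin x) x := by
      intro x _
      simpa [mul_comm] using ((Real.hasDerivAt_cos x).const_mul (-2 : ℝ))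
    have hsub := intervalIntegral.integral_comp_smul_deriv hderiv
      (by fun_prop : Continuous fun θ : ℝ => 2 * Real.sin θ).continuousOn hg
    have hends : (-2 * Real.cos 0 : ℝ) = -2 ∧ (-2 * Real.cos π : ℝ) = 2 := by
      norm_num [Real.cos_pi]
    rw [hends.1, hends.2] at hsub
    have heq : Set.EqOn
        (fun θ : ℝ => (2 * Real.sin θ) •
          (((fun t : ℝ => t ^ (2 * k) * Real.sqrt (4 - t ^ 2)) ∘
            fun θ : ℝ => -2 * Real.cos θ) θ))
        (fun θ : ℝ => (4:ℝ) ^ (k + 1) *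
          (Real.cos θ ^ (2 * k) - Real.cos θ ^ (2 * (k + 1))))
        (Set.uIcc (0:ℝ) π) := by
      intro θ hθ
      rw [Set.uIcc_of_le Real.pi_pos.le] at hθ
      have hs : 0 ≤ Real.sin θ := Real.sin_nonneg_of_nonneg_of_le_pi hθ.1 hθ.2
      have h1 : (4 : ℝ) - (-2 * Real.cos θ) ^ 2 = (2 * Real.sin θ) ^ 2 := by
        have := Real.sin_sq_add_cos_sq θ
        ring_nf
        nlinarith [this]
      have h2 : Real.sqrt (4 - (-2 * Real.cos θ) ^ 2) = 2 * Real.sin θ := by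
        rw [h1, Real.sqrt_sq (by positivity)]
      have h3 : (-2 * Real.cos θ) ^ (2 * k) = 4 ^ k * Real.cos θ ^ (2 * k) := by
        rw [pow_mul, pow_mul]
        rw [← mul_pow]
        congr 1
        ring
      simp only [smul_eq_mul, Function.comp_apply]
      rw [h2, h3]
      have hsq : Real.sin θ ^ 2 = 1 - Real.cos θ ^ 2 := Real.sin_sq θ
      linear_combination (4:ℝ) ^ k * 4 * Real.cos θ ^ (2 * k) * hsq
    rw [← hsub, intervalIntegral.integral_congr heq]
    have hint1 : IntervalIntegrable (fun θ : ℝ => Real.cos θ ^ (2 * k))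
        MeasureTheory.volume 0 π := (Real.continuous_cos.pow _).intervalIntegrable _ _
    have hint2 : IntervalIntegrable (fun θ : ℝ => Real.cos θ ^ (2 * (k + 1)))
        MeasureTheory.volume 0 π := (Real.continuous_cos.pow _).intervalIntegrable _ _
    rw [intervalIntegral.integral_const_mul, intervalIntegral.integral_sub hint1 hint2,
      cos_pow_even_integral k, cos_pow_even_integral (k + 1),
      prod_ratio_eq k, prod_ratio_eq (k + 1)]
    have hcb' : ((k : ℝ) + 1) * (Nat.centralBinom (k + 1) : ℝ)
        = 2 * (2 * k + 1) * (Nat.centralBinom k : ℝ) := by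
      exact_mod_cast Nat.succ_mul_centralBinom_succ k
    have hpi : Real.pi ≠ 0 := Real.pi_ne_zero
    have h4 : (4 : ℝ) ^ k ≠ 0 := by positivity
    have hB : ((Nat.centralBinom (k + 1)) : ℝ) = 2 * (2 * (k:ℝ) + 1) * (catalan k : ℝ) :=
      mul_left_cancel₀ hk1 (by linear_combination hcb' - 2 * (2 * (k:ℝ) + 1) * hcat)
    field_simp
    linear_combination (-4 * (4:ℝ) ^ k) * hcat + (-(4:ℝ) ^ k) * hB
  · field_simp at hcat ⊢
    rw [← hcb]; linarith [hcat]
end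

section
/- Let r > 0 with r ≤ 2/π². Then ∫_0^1 |f'(s)|² ds ≤ 5r, where f is the endpoint-smoothed inverse CDF of the semicircle law of (0,r): f(s) = (g(r)/r²)s² on [0,r], f = g on [r, 1-r], f(s) = (g(1-r)/r²)(1-s)² on [1-r, 1]. -/
open Set MeasureTheory intervalIntegral Filter

set_option maxHeartbeats 1000000 in
theorem perturbation_energy_bound (r : ℝ) (hr : 0 < r) (hr' : r ≤ 2 / Real.pi ^ 2)
    (g : ℝ → ℝ)
    (hg_mem : ∀ s ∈ Set.Icc (0 : ℝ) 1, g s ∈ Set.Icc (-r) r)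
    (hg_right : ∀ s ∈ Set.Icc (0 : ℝ) 1,
      (∫ t₁ in (-r)..(g s), (2 / (Real.pi * r ^ 2)) * Real.sqrt (r ^ 2 - t₁ ^ 2)) = s)
    (hg_left : ∀ t ∈ Set.Icc (-r) r,
      g (∫ t₁ in (-r)..t, (2 / (Real.pi * r ^ 2)) * Real.sqrt (r ^ 2 - t₁ ^ 2)) = t)
    (f f' : ℝ → ℝ)
    (hf1 : ∀ s ∈ Set.Icc (0 : ℝ) r, f s = (g r / r ^ 2) * s ^ 2)
    (hf2 : ∀ s ∈ Set.Ioc r (1 - r), f s = g s)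
    (hf3 : ∀ s ∈ Set.Icc (1 - r) 1, f s = (g (1 - r) / r ^ 2) * (1 - s) ^ 2)
    (hderiv : ∀ s ∈ Set.Icc (0 : ℝ) 1 \ {r, 1 - r}, HasDerivAt f (f' s) s) :
    (∫ s in (0 : ℝ)..1, |f' s| ^ 2) ≤ 5 * r := by
  have hπ : (0:ℝ) < Real.pi := Real.pi_pos
  have hπ2 : (9:ℝ) ≤ Real.pi ^ 2 := by nlinarith [Real.pi_gt_three]
  have hr2 : r < 1/2 := by
    have h1 : (2:ℝ)/Real.pi^2 ≤ 2/9 := by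
      apply div_le_div_of_nonneg_left (by norm_num) (by norm_num) hπ2
    linarith
  have hrlt : r < 1 - r := by linarith
  set ρ : ℝ → ℝ := fun t => 2 / (Real.pi * r ^ 2) * Real.sqrt (r ^ 2 - t ^ 2) with hρdef
  set C : ℝ → ℝ := fun t => ∫ t₁ in (-r)..t, ρ t₁ with hCdef
  have hρcont : Continuous ρ := by
    exact continuous_const.mul ((continuous_const.sub (continuous_pow 2)).sqrt)
  have hρnn : ∀ t, 0 ≤ ρ t := fun t => mul_nonneg (by positivity) (Real.sqrt_nonneg _)
  have hρpos : ∀ t ∈ Ioo (-r) r, 0 < ρ t := by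
    intro t ht
    apply mul_pos (by positivity)
    apply Real.sqrt_pos.2
    nlinarith [ht.1, ht.2]
  have hρint : ∀ a b : ℝ, IntervalIntegrable ρ volume a b := fun a b =>
    hρcont.intervalIntegrable a b
  have hCderiv : ∀ t : ℝ, HasDerivAt C (ρ t) t := fun t =>
    intervalIntegral.integral_hasDerivAt_right (hρint _ _)
      (hρcont.stronglyMeasurableAtFilter _ _) hρcont.continuousAt
  have hCadd : ∀ a b : ℝ, C b - C a = ∫ t in a..b, ρ t := by
    intro a b
    have h := intervalIntegral.integral_add_adjacent_intervals (hρint (-r) a) (hρint a b)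
    have h2 : C a + ∫ t in a..b, ρ t = C b := h
    linarith
  have hCmono : Monotone C := by
    intro a b hab
    have h := hCadd a b
    have h2 : 0 ≤ ∫ t in a..b, ρ t :=
      intervalIntegral.integral_nonneg hab (fun x _ => hρnn x)
    linarith
  have hC0 : C (-r) = 0 := intervalIntegral.integral_same
  -- C r = 1
  have hsq : (∫ t in (-r)..r, Real.sqrt (r ^ 2 - t ^ 2)) = r ^ 2 * (Real.pi / 2) := by
    have h1 : ∀ x : ℝ, Real.sqrt (r ^ 2 - (r * x) ^ 2) = r * Real.sqrt (1 - x ^ 2) := by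
      intro x
      rw [show r ^ 2 - (r * x) ^ 2 = r ^ 2 * (1 - x ^ 2) by ring,
        Real.sqrt_mul (sq_nonneg r), Real.sqrt_sq hr.le]
    have h2 : (∫ x in (-1:ℝ)..1, Real.sqrt (r ^ 2 - (r * x) ^ 2))
        = r⁻¹ • ∫ t in (-r)..r, Real.sqrt (r ^ 2 - t ^ 2) := by
      simpa using intervalIntegral.integral_comp_mul_left
        (fun t => Real.sqrt (r ^ 2 - t ^ 2)) (a := -1) (b := 1) hr.ne'
    have h3 : (∫ x in (-1:ℝ)..1, Real.sqrt (r ^ 2 - (r * x) ^ 2)) = r * (Real.pi/2) := by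
      simp only [h1]
      rw [intervalIntegral.integral_const_mul, integral_sqrt_one_sub_sq]
    rw [h3, smul_eq_mul] at h2
    field_simp at h2
    linarith
  have hCr : C r = 1 := by
    have h1 : C r = 2 / (Real.pi * r ^ 2) * ∫ t in (-r)..r, Real.sqrt (r ^ 2 - t ^ 2) :=
      intervalIntegral.integral_const_mul _ _
    rw [h1, hsq]
    field_simp
  have hCg : ∀ s ∈ Icc (0:ℝ) 1, C (g s) = s := fun s hs => hg_right s hs
  have g0 : g 0 = -r := by
    rw [← hC0]; exact hg_left (-r) ⟨le_refl _, by linarith⟩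
  have g1 : g 1 = r := by
    rw [← hCr]; exact hg_left r ⟨by linarith, le_refl _⟩
  have hg_strict : StrictMonoOn g (Icc (0:ℝ) 1) := by
    intro a ha b hb hab
    by_contra h
    push_neg at h
    have h2 := hCmono h
    rw [hCg a ha, hCg b hb] at h2
    linarith
  have hgIoo : ∀ s ∈ Ioo (0:ℝ) 1, g s ∈ Ioo (-r) r := by
    intro s hs
    constructor
    · have := hg_strict ⟨le_refl _, by norm_num⟩ ⟨hs.1.le, hs.2.le⟩ hs.1
      rwa [g0] at this
    · have := hg_strict ⟨hs.1.le, hs.2.le⟩ ⟨by norm_num, le_refl _⟩ hs.2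
      rwa [g1] at this
  have hg_contAt : ∀ s ∈ Ioo (0:ℝ) 1, ContinuousAt g s := by
    intro s hs
    apply hg_strict.continuousAt_of_image_mem_nhds (Icc_mem_nhds hs.1 hs.2)
    have himg : Icc (-r) r ⊆ g '' (Icc 0 1) := by
      intro t ht
      refine ⟨C t, ⟨?_, ?_⟩, hg_left t ht⟩
      · have := hCmono ht.1; rwa [hC0] at this
      · have := hCmono ht.2; rwa [hCr] at this
    exact Filter.mem_of_superset
      (Icc_mem_nhds (hgIoo s hs).1 (hgIoo s hs).2) himg
  have hgderiv : ∀ s ∈ Ioo (0:ℝ) 1, HasDerivAt g (ρ (g s))⁻¹ s := by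
    intro s hs
    apply HasDerivAt.of_local_left_inverse (hg_contAt s hs) (hCderiv (g s))
      (ne_of_gt (hρpos _ (hgIoo s hs)))
    filter_upwards [Ioo_mem_nhds hs.1 hs.2] with y hy
    exact hCg y ⟨hy.1.le, hy.2.le⟩
  -- value of f' on the middle
  have hmemdiff : ∀ s, 0 ≤ s → s ≤ 1 → s ≠ r → s ≠ 1 - r →
      s ∈ Set.Icc (0 : ℝ) 1 \ {r, 1 - r} := by
    intro s h1 h2 h3 h4
    refine ⟨⟨h1, h2⟩, ?_⟩
    simp only [mem_insert_iff, mem_singleton_iff]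
    push_neg
    exact ⟨h3, h4⟩
  have hf'mid : ∀ s ∈ Ioo r (1-r), f' s = (ρ (g s))⁻¹ := by
    intro s hs
    have hs01 : s ∈ Ioo (0:ℝ) 1 := ⟨lt_trans hr hs.1, by linarith [hs.2]⟩
    have hfd : HasDerivAt f (f' s) s :=
      hderiv s (hmemdiff s hs01.1.le hs01.2.le (ne_of_gt hs.1) (ne_of_lt hs.2))
    have hfg : f =ᶠ[nhds s] g := by
      filter_upwards [Ioo_mem_nhds hs.1 hs.2] with y hy
      exact hf2 y ⟨hy.1, hy.2.le⟩
    have h2 : HasDerivAt f (ρ (g s))⁻¹ s :=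
      (hgderiv s hs01).congr_of_eventuallyEq hfg
    exact hfd.unique h2
  -- antiderivative on the middle
  set F : ℝ → ℝ := fun s => Real.pi * r ^ 2 / 2 * Real.arcsin (g s / r) with hFdef
  have hFderiv : ∀ s ∈ Ioo r (1-r), HasDerivAt F ((f' s) ^ 2) s := by
    intro s hs
    have hs01 : s ∈ Ioo (0:ℝ) 1 := ⟨lt_trans hr hs.1, by linarith [hs.2]⟩
    have hgs := hgIoo s hs01
    have hA : 0 < Real.sqrt (r ^ 2 - (g s) ^ 2) := by
      apply Real.sqrt_pos.2; nlinarith [hgs.1, hgs.2]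
    set A := Real.sqrt (r ^ 2 - (g s) ^ 2) with hAdef
    have hA2 : A ^ 2 = r ^ 2 - (g s) ^ 2 := Real.sq_sqrt (by nlinarith [hgs.1, hgs.2])
    have harg1 : g s / r ≠ -1 := by
      intro h
      have : g s = -r := by field_simp at h; linarith
      linarith [hgs.1]
    have harg2 : g s / r ≠ 1 := by
      intro h
      have : g s = r := by field_simp at h; linarith
      linarith [hgs.2]
    have h1 : HasDerivAt (fun u => g u / r) ((ρ (g s))⁻¹ / r) s :=
      (hgderiv s hs01).div_const r
    have h2 : HasDerivAt Real.arcsin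
        (1 / Real.sqrt (1 - (g s / r) ^ 2)) (g s / r) :=
      Real.hasDerivAt_arcsin harg1 harg2
    have h3 : HasDerivAt (fun u => Real.arcsin (g u / r))
        (1 / Real.sqrt (1 - (g s / r) ^ 2) * ((ρ (g s))⁻¹ / r)) s := by have := h2.comp s h1; exact this
    have h4 : HasDerivAt F
        (Real.pi * r ^ 2 / 2 *
          (1 / Real.sqrt (1 - (g s / r) ^ 2) * ((ρ (g s))⁻¹ / r))) s :=
      h3.const_mul _
    have hsqrt : Real.sqrt (1 - (g s / r) ^ 2) = A / r := by
      rw [show 1 - (g s / r) ^ 2 = (A / r) ^ 2 by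
        rw [div_pow, div_pow, hA2]; field_simp]
      exact Real.sqrt_sq (by positivity)
    have hρval : ρ (g s) = 2 / (Real.pi * r ^ 2) * A := rfl
    have hval : Real.pi * r ^ 2 / 2 *
        (1 / Real.sqrt (1 - (g s / r) ^ 2) * ((ρ (g s))⁻¹ / r)) = (f' s) ^ 2 := by
      rw [hf'mid s hs, hsqrt, hρval]
      field_simp
    rwa [hval] at h4
  -- continuity of F on the closed middle interval
  have hgcontOn : ContinuousOn g (Icc r (1-r)) := fun s hs =>
    (hg_contAt s ⟨lt_of_lt_of_le hr hs.1, lt_of_le_of_lt hs.2 (by linarith)⟩).continuousWithinAt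
  have hFcont : ContinuousOn F (Icc r (1-r)) :=
    continuousOn_const.mul
      (Real.continuous_arcsin.comp_continuousOn (hgcontOn.div_const r))
  -- integrability of |f'|^2 on the middle
  have hgIn : ∀ s ∈ Icc r (1-r), g s ∈ Ioo (-r) r := fun s hs =>
    hgIoo s ⟨lt_of_lt_of_le hr hs.1, lt_of_le_of_lt hs.2 (by linarith)⟩
  have hφcont : ContinuousOn (fun s => ((ρ (g s))⁻¹) ^ 2) (Icc r (1-r)) := by
    apply ContinuousOn.pow
    apply ContinuousOn.inv₀
    · exact hρcont.comp_continuousOn hgcontOn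
    · intro s hs; exact ne_of_gt (hρpos _ (hgIn s hs))
  have hφint : IntervalIntegrable (fun s => ((ρ (g s))⁻¹) ^ 2) volume r (1-r) := by
    apply ContinuousOn.intervalIntegrable
    rwa [uIcc_of_le hrlt.le]
  have haeM : ∀ᵐ x ∂(volume.restrict (Set.uIoc r (1-r))),
      (fun s => ((ρ (g s))⁻¹) ^ 2) x = (fun s => |f' s| ^ 2) x := by
    rw [ae_restrict_iff' measurableSet_uIoc]
    have h2 : ∀ᵐ s : ℝ, s ≠ 1 - r := by
      simp only [ne_eq, ae_iff, not_not, setOf_eq_eq_singleton, measure_singleton]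
    filter_upwards [h2] with s hs hmem
    rw [uIoc_of_le hrlt.le] at hmem
    have hs' : s ∈ Ioo r (1-r) := ⟨hmem.1, lt_of_le_of_ne hmem.2 hs⟩
    simp only [sq_abs, hf'mid s hs']
  have hmid_int : IntervalIntegrable (fun s => |f' s| ^ 2) volume r (1-r) :=
    hφint.congr_ae haeM
  -- middle integral bound
  have hmid : (∫ s in r..(1-r), |f' s| ^ 2) ≤ r := by
    have heq : (∫ s in r..(1-r), |f' s| ^ 2) = F (1-r) - F r :=
      intervalIntegral.integral_eq_sub_of_hasDerivAt_of_le hrlt.le hFcont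
        (fun x hx => by rw [sq_abs]; exact hFderiv x hx) hmid_int
    have h1 : Real.arcsin (g (1-r) / r) ≤ Real.pi/2 := Real.arcsin_le_pi_div_two _
    have h2 : -(Real.pi/2) ≤ Real.arcsin (g r / r) := Real.neg_pi_div_two_le_arcsin _
    have h3 : F (1-r) - F r ≤ Real.pi * r ^ 2 / 2 * Real.pi := by
      have hc : (0:ℝ) < Real.pi * r ^ 2 / 2 := by positivity
      have : Real.arcsin (g (1-r) / r) - Real.arcsin (g r / r) ≤ Real.pi := by linarith
      calc F (1-r) - F r
          = Real.pi * r ^ 2 / 2 *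
            (Real.arcsin (g (1-r) / r) - Real.arcsin (g r / r)) := by rw [hFdef]; ring
        _ ≤ Real.pi * r ^ 2 / 2 * Real.pi := by
            exact mul_le_mul_of_nonneg_left this hc.le
    have h4 : Real.pi * r ^ 2 / 2 * Real.pi ≤ r := by
      have h5 : r * Real.pi ^ 2 ≤ 2 := by
        rw [le_div_iff₀ (by positivity : (0:ℝ) < Real.pi ^ 2)] at hr'
        linarith
      nlinarith
    linarith [heq, h3, h4]
  -- left cap
  have hf'left : ∀ s ∈ Ioo (0:ℝ) r, f' s = g r / r ^ 2 * (2 * s) := by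
    intro s hs
    have hfd : HasDerivAt f (f' s) s :=
      hderiv s (hmemdiff s hs.1.le (by linarith [hs.2]) (ne_of_lt hs.2)
        (by intro h; rw [h] at hs; linarith [hs.2]))
    have hq : HasDerivAt (fun u => (g r / r ^ 2) * u ^ 2) (g r / r ^ 2 * (2 * s)) s := by
      simpa using ((hasDerivAt_pow 2 s).const_mul (g r / r ^ 2))
    have hfq : f =ᶠ[nhds s] (fun u => (g r / r ^ 2) * u ^ 2) := by
      filter_upwards [Ioo_mem_nhds hs.1 hs.2] with y hy
      exact hf1 y ⟨hy.1.le, hy.2.le⟩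
    exact hfd.unique (hq.congr_of_eventuallyEq hfq)
  have hgr_sq : (g r) ^ 2 ≤ r ^ 2 := by
    have := hg_mem r ⟨hr.le, by linarith⟩
    nlinarith [this.1, this.2]
  have hcapL_int : IntervalIntegrable (fun s => |f' s| ^ 2) volume 0 r := by
    refine IntervalIntegrable.congr_ae
      (f := fun s => (g r / r ^ 2 * (2 * s)) ^ 2) ?_ ?_
    · exact ((continuous_const.mul (continuous_const.mul continuous_id)).pow 2).intervalIntegrable _ _
    · have hae : ∀ᵐ x ∂(volume.restrict (Set.uIoc 0 r)),
          (fun s => (g r / r ^ 2 * (2 * s)) ^ 2) x = (fun s => |f' s| ^ 2) x := by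
        rw [ae_restrict_iff' measurableSet_uIoc]
        have h2 : ∀ᵐ s : ℝ, s ≠ r := by
          simp only [ne_eq, ae_iff, not_not, setOf_eq_eq_singleton, measure_singleton]
        filter_upwards [h2] with s hs hmem
        rw [uIoc_of_le hr.le] at hmem
        have hs' : s ∈ Ioo (0:ℝ) r := ⟨hmem.1, lt_of_le_of_ne hmem.2 hs⟩
        simp only [sq_abs, hf'left s hs']
      exact hae
  have hcapL : (∫ s in (0:ℝ)..r, |f' s| ^ 2) ≤ 4/3 * r := by
    have heq : (∫ s in (0:ℝ)..r, |f' s| ^ 2)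
        = ∫ s in (0:ℝ)..r, (g r / r ^ 2 * (2 * s)) ^ 2 := by
      apply intervalIntegral.integral_congr_ae
      have h2 : ∀ᵐ s : ℝ, s ≠ r := by
        simp only [ne_eq, ae_iff, not_not, setOf_eq_eq_singleton, measure_singleton]
      filter_upwards [h2] with s hs hmem
      rw [uIoc_of_le hr.le] at hmem
      have hs' : s ∈ Ioo (0:ℝ) r := ⟨hmem.1, lt_of_le_of_ne hmem.2 hs⟩
      simp only [sq_abs, hf'left s hs']
    rw [heq]
    have hval : (∫ s in (0:ℝ)..r, (g r / r ^ 2 * (2 * s)) ^ 2)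
        = 4 * (g r / r ^ 2) ^ 2 * (r ^ 3 / 3) := by
      have hfe : (fun s : ℝ => (g r / r ^ 2 * (2 * s)) ^ 2)
          = fun s : ℝ => (4 * (g r / r ^ 2) ^ 2) * s ^ 2 := by
        funext s; ring
      rw [hfe, intervalIntegral.integral_const_mul, integral_pow]
      norm_num
    rw [hval]
    have : 4 * (g r / r ^ 2) ^ 2 * (r ^ 3 / 3) = 4 / 3 * ((g r) ^ 2 / r) := by
      field_simp
    rw [this]
    have hd : (g r)^2 / r ≤ r := by rw [div_le_iff₀ hr]; nlinarith [hgr_sq]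
    linarith
  -- right cap
  have hf'right : ∀ s ∈ Ioo (1-r) 1, f' s = g (1-r) / r ^ 2 * (2 * (1 - s)) * (-1) := by
    intro s hs
    have hfd : HasDerivAt f (f' s) s :=
      hderiv s (hmemdiff s (by linarith [hs.1]) hs.2.le
        (by intro h; rw [h] at hs; linarith [hs.1]) (ne_of_gt hs.1))
    have hid : HasDerivAt (fun u : ℝ => 1 - u) (-1) s := by
      simpa using (hasDerivAt_id s).const_sub 1
    have hq : HasDerivAt (fun u => (g (1-r) / r ^ 2) * (1 - u) ^ 2)
        (g (1-r) / r ^ 2 * (2 * (1 - s)) * (-1)) s := by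
      have := ((hid.fun_pow 2).const_mul (g (1-r) / r ^ 2))
      refine this.congr_deriv ?_
      push_cast
      ring
    have hfq : f =ᶠ[nhds s] (fun u => (g (1-r) / r ^ 2) * (1 - u) ^ 2) := by
      filter_upwards [Ioo_mem_nhds hs.1 hs.2] with y hy
      exact hf3 y ⟨hy.1.le, hy.2.le⟩
    exact hfd.unique (hq.congr_of_eventuallyEq hfq)
  have hgr_sq' : (g (1-r)) ^ 2 ≤ r ^ 2 := by
    have := hg_mem (1-r) ⟨by linarith, by linarith⟩
    nlinarith [this.1, this.2]
  have hcapR_int : IntervalIntegrable (fun s => |f' s| ^ 2) volume (1-r) 1 := by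
    refine IntervalIntegrable.congr_ae
      (f := fun s => (g (1-r) / r ^ 2 * (2 * (1 - s)) * (-1)) ^ 2) ?_ ?_
    · apply Continuous.intervalIntegrable
      continuity
    · have hae : ∀ᵐ x ∂(volume.restrict (Set.uIoc (1-r) 1)),
          (fun s => (g (1-r) / r ^ 2 * (2 * (1 - s)) * (-1)) ^ 2) x = (fun s => |f' s| ^ 2) x := by
        rw [ae_restrict_iff' measurableSet_uIoc]
        have h2 : ∀ᵐ s : ℝ, s ≠ 1 := by
          simp only [ne_eq, ae_iff, not_not, setOf_eq_eq_singleton, measure_singleton]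
        filter_upwards [h2] with s hs hmem
        rw [uIoc_of_le (by linarith : (1-r:ℝ) ≤ 1)] at hmem
        have hs' : s ∈ Ioo (1-r) 1 := ⟨hmem.1, lt_of_le_of_ne hmem.2 hs⟩
        simp only [sq_abs, hf'right s hs']
      exact hae
  have hcapR : (∫ s in (1-r)..1, |f' s| ^ 2) ≤ 4/3 * r := by
    have heq : (∫ s in (1-r)..1, |f' s| ^ 2)
        = ∫ s in (1-r)..1, (g (1-r) / r ^ 2 * (2 * (1 - s)) * (-1)) ^ 2 := by
      apply intervalIntegral.integral_congr_ae
      have h2 : ∀ᵐ s : ℝ, s ≠ 1 := by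
        simp only [ne_eq, ae_iff, not_not, setOf_eq_eq_singleton, measure_singleton]
      filter_upwards [h2] with s hs hmem
      rw [uIoc_of_le (by linarith : (1-r:ℝ) ≤ 1)] at hmem
      have hs' : s ∈ Ioo (1-r) 1 := ⟨hmem.1, lt_of_le_of_ne hmem.2 hs⟩
      simp only [sq_abs, hf'right s hs']
    rw [heq]
    have hval : (∫ s in (1-r)..1, (g (1-r) / r ^ 2 * (2 * (1 - s)) * (-1)) ^ 2)
        = 4 * (g (1-r) / r ^ 2) ^ 2 * (r ^ 3 / 3) := by
      have hfe : (fun s : ℝ => (g (1-r) / r ^ 2 * (2 * (1 - s)) * (-1)) ^ 2)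
          = fun s : ℝ => (4 * (g (1-r) / r ^ 2) ^ 2) * (1 - s) ^ 2 := by
        funext s; ring
      rw [hfe, intervalIntegral.integral_const_mul]
      have hsub : (∫ s in (1-r)..1, (1 - s) ^ 2) = ∫ x in (0:ℝ)..r, x ^ 2 := by
        have := intervalIntegral.integral_comp_sub_left
          (fun x : ℝ => x ^ 2) (a := 1-r) (b := 1) 1
        simpa using this
      rw [hsub, integral_pow]
      norm_num
    rw [hval]
    have : 4 * (g (1-r) / r ^ 2) ^ 2 * (r ^ 3 / 3) = 4 / 3 * ((g (1-r)) ^ 2 / r) := by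
      field_simp
    rw [this]
    have hd : (g (1-r))^2 / r ≤ r := by rw [div_le_iff₀ hr]; nlinarith [hgr_sq']
    linarith
  -- combine
  have h0m : IntervalIntegrable (fun s => |f' s| ^ 2) volume 0 (1-r) :=
    hcapL_int.trans hmid_int
  have hsplit1 : (∫ s in (0:ℝ)..(1-r), |f' s| ^ 2)
      = (∫ s in (0:ℝ)..r, |f' s| ^ 2) + ∫ s in r..(1-r), |f' s| ^ 2 :=
    (intervalIntegral.integral_add_adjacent_intervals hcapL_int hmid_int).symm
  have hsplit2 : (∫ s in (0:ℝ)..1, |f' s| ^ 2)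
      = (∫ s in (0:ℝ)..(1-r), |f' s| ^ 2) + ∫ s in (1-r)..1, |f' s| ^ 2 :=
    (intervalIntegral.integral_add_adjacent_intervals h0m hcapR_int).symm
  rw [hsplit2, hsplit1]
  linarith [hmid, hcapL, hcapR]
end
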